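/- Let Φ(ρ) = ∑_a D_a ρ D_a† be a completely positive map on 2^n × 2^n matrices such that ⟨i|Φ(|x⟩⟨y|)|j⟩ = 0 whenever h(i,j) ≠ h(x,y). Then for any positive semidefinite ρ with entries ρ_{xy}, and for every pair (i,j), one has |⟨i|Φ(ρ)|j⟩| ≤ ∑'_{x,y} |ρ_{xy}| √(p_{i|x} p_{j|y}), where p_{i|x} = ⟨i|Φ(|x⟩⟨x|)|i⟩ and the primed sum runs over all pairs (x,y) with h(x,y) = h(i,j). -/

import Mathlib

open scoped Matrix ComplexOrder
/-- Entrywise Cauchy–Schwarz bound for Hamming-distance-preserving CP maps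
(Proposition 2 of the paper). -/
theorem hdp_cp_map_entry_bound (n m : ℕ)
    (D : Fin m → Matrix (Fin n → Bool) (Fin n → Bool) ℂ)
    (Φ : Matrix (Fin n → Bool) (Fin n → Bool) ℂ → Matrix (Fin n → Bool) (Fin n → Bool) ℂ)
    (hΦ : ∀ ρ, Φ ρ = ∑ a, D a * ρ * (D a)ᴴ)
    (hHDP : ∀ i j x y : Fin n → Bool, hammingDist i j ≠ hammingDist x y →
      Φ (Matrix.single x y 1) i j = 0)
    (p : (Fin n → Bool) → (Fin n → Bool) → ℝ)
    (hp : ∀ i x, p i x = (Φ (Matrix.single x x 1) i i).re)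
    (ρ : Matrix (Fin n → Bool) (Fin n → Bool) ℂ) (hρ : ρ.PosSemidef)
    (i j : Fin n → Bool) :
    ‖Φ ρ i j‖ ≤
      ∑ x : Fin n → Bool, ∑ y : Fin n → Bool,
        if hammingDist x y = hammingDist i j then
          ‖ρ x y‖ * Real.sqrt (p i x * p j y) else 0 := by
  classical
  -- entry formula for std basis matrices
  have key : ∀ k l x y : Fin n → Bool,
      Φ (Matrix.single x y 1) k l = ∑ a, D a k x * star (D a l y) := by
    intro k l x y
    rw [hΦ, Matrix.sum_apply]
    refine Finset.sum_congr rfl fun a _ => ?_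
    simp [Matrix.mul_apply, Matrix.conjTranspose_apply, Matrix.single,
      Matrix.of_apply, ite_and, Finset.sum_mul, mul_ite, ite_mul, mul_zero, zero_mul,
      mul_one]
  have hpval : ∀ k x, p k x = ∑ a, Complex.normSq (D a k x) := by
    intro k x
    rw [hp, key]
    simp [RCLike.star_def, Complex.mul_conj]
  have hpnn : ∀ k x, (0:ℝ) ≤ p k x := fun k x => by
    rw [hpval]; exact Finset.sum_nonneg fun _ _ => Complex.normSq_nonneg _
  set c : (Fin n → Bool) → (Fin n → Bool) → ℂ :=
    fun x y => ∑ a, D a i x * star (D a j y) with hc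
  have hentry : Φ ρ i j = ∑ x : Fin n → Bool, ∑ y : Fin n → Bool, ρ x y * c x y := by
    have h1 : ∀ a : Fin m, (D a * ρ * (D a)ᴴ) i j
        = ∑ x : Fin n → Bool, ∑ y : Fin n → Bool, ρ x y * (D a i x * star (D a j y)) := by
      intro a
      simp only [Matrix.mul_apply, Matrix.conjTranspose_apply, Finset.sum_mul]
      rw [Finset.sum_comm]
      exact Finset.sum_congr rfl fun x _ => Finset.sum_congr rfl fun y _ => by ring
    rw [hΦ, Matrix.sum_apply]
    simp only [h1, hc, Finset.mul_sum]
    rw [Finset.sum_comm]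
    exact Finset.sum_congr rfl fun x _ => Finset.sum_comm
  have cs : ∀ x y : Fin n → Bool,
      ‖c x y‖ ≤ Real.sqrt (p i x * p j y) := by
    intro x y
    have h2 := norm_inner_le_norm (𝕜 := ℂ)
      ((WithLp.equiv 2 (Fin m → ℂ)).symm fun a => D a j y)
      ((WithLp.equiv 2 (Fin m → ℂ)).symm fun a => D a i x)
    have hinner : (inner ℂ ((WithLp.equiv 2 (Fin m → ℂ)).symm fun a => D a j y)
        ((WithLp.equiv 2 (Fin m → ℂ)).symm fun a => D a i x) : ℂ) = c x y := by
      simp only [PiLp.inner_apply, RCLike.inner_apply, hc, WithLp.equiv_symm_apply, PiLp.toLp_apply]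
      exact Finset.sum_congr rfl fun a _ => rfl
    have hnu : ‖((WithLp.equiv 2 (Fin m → ℂ)).symm fun a => D a j y : EuclideanSpace ℂ (Fin m))‖
        = Real.sqrt (p j y) := by
      rw [EuclideanSpace.norm_eq, hpval]
      congr 1
      refine Finset.sum_congr rfl fun a _ => ?_
      simp [WithLp.equiv_symm_apply, PiLp.toLp_apply, Complex.normSq_eq_norm_sq]
    have hnv : ‖((WithLp.equiv 2 (Fin m → ℂ)).symm fun a => D a i x : EuclideanSpace ℂ (Fin m))‖
        = Real.sqrt (p i x) := by
      rw [EuclideanSpace.norm_eq, hpval]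
      congr 1
      refine Finset.sum_congr rfl fun a _ => ?_
      simp [WithLp.equiv_symm_apply, PiLp.toLp_apply, Complex.normSq_eq_norm_sq]
    rw [hinner, hnu, hnv] at h2
    calc ‖c x y‖ ≤ Real.sqrt (p j y) * Real.sqrt (p i x) := h2
      _ = Real.sqrt (p i x * p j y) := by
          rw [mul_comm, ← Real.sqrt_mul (hpnn i x)]
  rw [hentry]
  calc ‖∑ x : Fin n → Bool, ∑ y : Fin n → Bool, ρ x y * c x y‖
      ≤ ∑ x : Fin n → Bool, ∑ y : Fin n → Bool, ‖ρ x y * c x y‖ :=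
        (norm_sum_le _ _).trans
          (Finset.sum_le_sum fun x _ => norm_sum_le _ _)
    _ ≤ ∑ x : Fin n → Bool, ∑ y : Fin n → Bool,
        if hammingDist x y = hammingDist i j then
          ‖ρ x y‖ * Real.sqrt (p i x * p j y) else 0 := by
        refine Finset.sum_le_sum fun x _ => Finset.sum_le_sum fun y _ => ?_
        by_cases h : hammingDist x y = hammingDist i j
        · rw [if_pos h, norm_mul]
          exact mul_le_mul_of_nonneg_left (cs x y) (norm_nonneg _)
        · rw [if_neg h]
          have hz : c x y = 0 := by
            have h0 := hHDP i j x y fun hh => h hh.symm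
            rwa [key i j x y] at h0
          simp [hz]
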